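/- arXiv:2204.13977 — 2 statements merged into one kernel-verified Lean document; each statement's English description precedes it below -/
import Mathlib

section
/- For all k,l ≥ 1, the two-dimensional infinite Fibonacci word f_{∞,∞} has exactly (k+1)(l+1) distinct factors of size (k,l); that is, the number of distinct functions X : Fin k × Fin l → Fin 2 × Fin 2 for which there exist i₀,j₀ ∈ ℕ with X(p,q) = f_{∞,∞}(i₀+p, j₀+q) for all p,q is (k+1)(l+1). -/
/-- Fibonacci numbers: F(0)=1, F(1)=1, F(n+2)=F(n+1)+F(n). -/
def F : ℕ → ℕ
  | 0 => 1
  | 1 => 1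
  | n + 2 => F (n + 1) + F n

/-- Finite Fibonacci words over {a,b} coded as Fin 2 (a=0, b=1). -/
def fibWord : ℕ → List (Fin 2)
  | 0 => [0]
  | 1 => [1]
  | n + 2 => fibWord (n + 1) ++ fibWord n

/-- The Fibonacci arrays f_{m,n} over {a,b,c,d} coded as Fin 2 × Fin 2,
with a=(0,0), b=(0,1), c=(1,0), d=(1,1); `fibArr m n i j` is the (i,j) entry
(0-indexed, only indices i < F m, j < F n are meaningful). -/
def fibArr : ℕ → ℕ → ℕ → ℕ → Fin 2 × Fin 2
  | 0, 0, _, _ => (0, 0)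
  | 0, 1, _, _ => (0, 1)
  | 1, 0, _, _ => (1, 0)
  | 1, 1, _, _ => (1, 1)
  | 0, n + 2, i, j =>
      if j < F (n + 1) then fibArr 0 (n + 1) i j else fibArr 0 n i (j - F (n + 1))
  | 1, n + 2, i, j =>
      if j < F (n + 1) then fibArr 1 (n + 1) i j else fibArr 1 n i (j - F (n + 1))
  | m + 2, k, i, j =>
      if i < F (m + 1) then fibArr (m + 1) k i j else fibArr m k (i - F (m + 1)) j
  termination_by m n => (m, n)

/-- The r × l subarray of u with top-left entry at (i,j). -/
def subarr (u : ℕ → ℕ → Fin 2 × Fin 2) (i j r l : ℕ) : Fin r × Fin l → Fin 2 × Fin 2 :=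
  fun p => u (i + p.1.val) (j + p.2.val)

/-- Number of square occurrences in a finite word. -/
noncomputable def sqOcc (w : List (Fin 2)) : ℕ :=
  {p : ℕ × ℕ | 1 ≤ p.2 ∧ p.1 + 2 * p.2 ≤ w.length ∧
    ∀ t < p.2, w.getD (p.1 + t) 0 = w.getD (p.1 + p.2 + t) 0}.ncard

/-- R(n): number of square occurrences in f_n. -/
noncomputable def R (n : ℕ) : ℕ := sqOcc (fibWord n)


noncomputable section
namespace Stmt14Aux
open scoped Classical

/-- golden ratio conjugate -/
def al : ℝ := (Real.sqrt 5 - 1) / 2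

lemma sqrt5_sq : Real.sqrt 5 ^ 2 = 5 := Real.sq_sqrt (by norm_num)

lemma sqrt5_lt : (2:ℝ) < Real.sqrt 5 ∧ Real.sqrt 5 < 3 := by
  constructor
  · have : (2:ℝ) = Real.sqrt 4 := by
      rw [show (4:ℝ) = 2^2 by norm_num, Real.sqrt_sq]; norm_num
    rw [this]; exact Real.sqrt_lt_sqrt (by norm_num) (by norm_num)
  · have : (3:ℝ) = Real.sqrt 9 := by
      rw [show (9:ℝ) = 3^2 by norm_num, Real.sqrt_sq]; norm_num
    rw [this]; exact Real.sqrt_lt_sqrt (by norm_num) (by norm_num)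

lemma al_pos : 0 < al := by
  have := sqrt5_lt.1; unfold al; linarith

lemma al_lt_one : al < 1 := by
  have := sqrt5_lt.2; unfold al; linarith

lemma al_sq : al ^ 2 = 1 - al := by
  unfold al; have := sqrt5_sq; ring_nf; nlinarith [sqrt5_sq]

lemma al_irr : Irrational al := by
  have h5 : Irrational (Real.sqrt 5) := (Nat.Prime.irrational_sqrt (p := 5) (by norm_num))
  unfold al
  have h1 : Irrational (Real.sqrt 5 - 1) := by
    simpa using h5.sub_intCast 1
  simpa using h1.div_intCast (m := 2) (by norm_num)

/-- key irrationality consequence: q*al never an integer unless q = 0 -/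
lemma al_mul_ne_int (q : ℤ) (hq : q ≠ 0) (k : ℤ) : (q:ℝ) * al ≠ k := by
  intro h
  have : Irrational ((q:ℝ) * al) := (al_irr.intCast_mul hq)
  exact this ⟨(k:ℚ), by push_cast; exact h.symm⟩

lemma F_pos (n : ℕ) : 0 < F n := by
  induction n using Nat.strong_induction_on with
  | _ n ih =>
    match n with
    | 0 => simp [F]
    | 1 => simp [F]
    | n+2 => simp only [F]; have := ih (n+1) (by omega); omega

lemma F_lt (n : ℕ) : n < F (n+1) := by
  induction n using Nat.strong_induction_on with
  | _ n ih =>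
    match n with
    | 0 => simp [F]
    | n+1 =>
      show n+1 < F (n+2)
      simp only [F]
      have h1 := ih n (by omega)
      have h2 := F_pos n
      omega

lemma F_mono (n : ℕ) : F n ≤ F (n+1) := by
  match n with
  | 0 => simp [F]
  | n+1 => simp only [F]; have := F_pos n; omega

/-- E(n): F(n+1) * al = F n + (-1)^(n+1) * al^(n+2) -/
lemma E (n : ℕ) : (F (n+1) : ℝ) * al = F n + (-1)^(n+1) * al^(n+2) := by
  induction n using Nat.strong_induction_on with
  | _ n ih =>
    match n with
    | 0 =>
      show (F 1 : ℝ) * al = F 0 + (-1)^1 * al^2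
      rw [al_sq]; simp [F]
    | 1 =>
      show (F 2 : ℝ) * al = F 1 + (-1)^2 * al^3
      have h2 : al^3 = al * al^2 := by ring
      rw [h2, al_sq]
      simp only [F]
      push_cast
      nlinarith [al_sq]
    | n+2 =>
      have h1 := ih (n+1) (by omega)
      have h0 := ih n (by omega)
      show (F (n+3) : ℝ) * al = F (n+2) + (-1)^(n+3) * al^(n+4)
      have hF : (F (n+3) : ℝ) = F (n+2) + F (n+1) := by
        show ((F (n+2) + F (n+1) : ℕ) : ℝ) = _
        push_cast; ring
      have hF2 : (F (n+2) : ℝ) = F (n+1) + F n := by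
        show ((F (n+1) + F n : ℕ) : ℝ) = _
        push_cast; ring
      rw [hF, add_mul, h1, h0, hF2]
      have : (-1:ℝ)^(n+2) * al^(n+3) + (-1)^(n+1) * al^(n+2)
           = (-1)^(n+3) * (al^(n+2) * (1 - al)) := by ring
      rw [← al_sq] at this
      ring_nf
      ring_nf at this
      linarith [this]


/-- distance to nearest integer (via fract) -/
def nrm (x : ℝ) : ℝ := min (Int.fract x) (1 - Int.fract x)

lemma fract_eq_of {x y : ℝ} (k : ℤ) (h0 : 0 ≤ y) (h1 : y < 1) (h : x = k + y) :
    Int.fract x = y := by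
  rw [h, Int.fract_intCast_add, Int.fract_eq_self.mpr ⟨h0, h1⟩]

lemma al_pow_pos (n : ℕ) : 0 < al ^ n := pow_pos al_pos n

lemma al_pow_lt_one (n : ℕ) (hn : 1 ≤ n) : al ^ n < 1 :=
  pow_lt_one₀ (le_of_lt al_pos) al_lt_one (by omega)

lemma al_pow_succ_lt (n : ℕ) : al ^ (n+1) < al ^ n := by
  have h := al_pow_pos n
  calc al ^ (n+1) = al ^ n * al := by ring
  _ < al ^ n * 1 := by nlinarith [al_lt_one]
  _ = al ^ n := by ring

lemma fract_al : Int.fract al = al := Int.fract_eq_self.mpr ⟨le_of_lt al_pos, al_lt_one⟩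

lemma al_half : 1 - al < al := by
  have h := mul_lt_mul_of_pos_left al_lt_one al_pos
  nlinarith [al_sq]

lemma al_cube : al ^ 3 ≤ 1/4 := by
  have h : al^3 = al * (1 - al) := by rw [← al_sq]; ring
  nlinarith [sq_nonneg (2*al - 1)]

/-- C(n): for 1 ≤ q ≤ F n, nrm (q * al) ≥ al^(n+1) -/
lemma Cl : ∀ n : ℕ, 1 ≤ n → ∀ q : ℕ, 1 ≤ q → q ≤ F n → al^(n+1) ≤ nrm ((q:ℝ) * al) := by
  intro n
  induction n using Nat.strong_induction_on with
  | _ n ih =>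
    match n with
    | 0 => omega
    | 1 =>
      intro _ q hq1 hq2
      have hq : q = 1 := by
        have : F 1 = 1 := rfl
        omega
      subst hq
      unfold nrm
      rw [show ((1:ℕ):ℝ) * al = al by push_cast; ring, fract_al]
      have h2 : al^(1+1) = 1 - al := by rw [show (1:ℕ)+1 = 2 from rfl, al_sq]
      refine le_min (by linarith [al_half]) (by linarith)
    | 2 =>
      intro _ q hq1 hq2
      have hq : q = 1 ∨ q = 2 := by
        have : F 2 = 2 := rfl
        omega
      rcases hq with h | h <;> subst h
      · unfold nrm
        rw [show ((1:ℕ):ℝ) * al = al by push_cast; ring, fract_al]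
        have h3 : al^(2+1) = al^3 := by ring
        rw [h3]
        have h4 : al^3 < al^2 := al_pow_succ_lt 2
        refine le_min (by nlinarith [al_cube, al_half, al_pos]) (by linarith [al_sq])
      · have h2 : ((2:ℕ):ℝ) * al = 1 + al^3 := by
          have hE := E 1
          rw [show F 2 = 2 from rfl, show F 1 = 1 from rfl] at hE
          push_cast at hE ⊢
          linarith [hE]
        have hf : Int.fract (((2:ℕ):ℝ) * al) = al ^ 3 := by
          apply fract_eq_of 1 (le_of_lt (al_pow_pos 3)) (al_pow_lt_one 3 (by omega))
          rw [h2]; push_cast; ring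
        unfold nrm
        rw [hf]
        have h3 : al^(2+1) = al^3 := by ring
        rw [h3]
        refine le_min le_rfl (by nlinarith [al_cube, al_pow_pos 3])
    | (n+3) =>
      intro _ q hq1 hq2
      by_cases hle : q ≤ F (n+2)
      · calc al^(n+4) ≤ al^(n+3) := le_of_lt (al_pow_succ_lt (n+3))
        _ ≤ nrm (q * al) := ih (n+2) (by omega) (by omega) q hq1 hle
      · push_neg at hle
        obtain ⟨r, hr1, hr2, hqr⟩ : ∃ r, 1 ≤ r ∧ r ≤ F (n+1) ∧ q = F (n+2) + r := by
          refine ⟨q - F (n+2), by omega, ?_, by omega⟩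
          have : F (n+3) = F (n+2) + F (n+1) := rfl
          omega
        have hC := ih (n+1) (by omega) (by omega) r hr1 hr2
        set f := Int.fract ((r:ℝ) * al) with hfdef
        have hf1 : al^(n+2) ≤ f := le_trans hC (min_le_left _ _)
        have hf2 : al^(n+2) ≤ 1 - f := le_trans hC (min_le_right _ _)
        set e := (-1:ℝ)^(n+2) * al^(n+3) with hedef
        have he : |e| = al^(n+3) := by
          rw [hedef, abs_mul, abs_pow, abs_neg, abs_one, one_pow, one_mul,
            abs_of_pos (al_pow_pos (n+3))]
        have he1 : -al^(n+3) ≤ e := by rw [← he]; exact neg_abs_le e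
        have he2 : e ≤ al^(n+3) := by rw [← he]; exact le_abs_self e
        have hlt : al^(n+3) < al^(n+2) := al_pow_succ_lt (n+2)
        have hqal : (q:ℝ) * al = ((F (n+1) : ℤ) + ⌊(r:ℝ) * al⌋ : ℤ) + (f + e) := by
          have hE : (F (n+2) : ℝ) * al = F (n+1) + e := E (n+1)
          have hfl : (r:ℝ) * al = ⌊(r:ℝ) * al⌋ + f := by
            rw [hfdef]; exact (Int.floor_add_fract _).symm
          rw [hqr]
          push_cast
          linear_combination hE + hfl
        have hfr : Int.fract ((q:ℝ) * al) = f + e := by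
          apply fract_eq_of _ (by linarith) (by linarith) hqal
        unfold nrm
        rw [hfr]
        have hkey : al^(n+4) = al^(n+2) - al^(n+3) := by
          calc al^(n+4) = al^(n+2) * al^2 := by ring
          _ = al^(n+2) * (1 - al) := by rw [al_sq]
          _ = al^(n+2) - al^(n+3) := by ring
        refine le_min (by linarith) (by linarith)


lemma F_strict (n : ℕ) : F (n+1) < F (n+2) := by
  have := F_pos n
  show F (n+1) < F (n+1) + F n
  omega

/-- the infinite Fibonacci word via the Beatty/Sturmian formula -/
def uu (i : ℕ) : Fin 2 := if 1 - al ≤ Int.fract (((i:ℝ)+1) * al) then 1 else 0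

lemma shift (n : ℕ) (hn : 1 ≤ n) (r : ℕ) (hr : r < F n) :
    uu (F (n+1) + r) = uu r := by
  have hCx := Cl n hn (r+1) (by omega) (by omega)
  rw [nrm] at hCx
  push_cast at hCx
  set x := Int.fract (((r:ℝ)+1) * al) with hx
  have hx1 : al^(n+1) ≤ x := le_trans hCx (min_le_left _ _)
  have hx2 : al^(n+1) ≤ 1 - x := le_trans hCx (min_le_right _ _)
  set e := (-1:ℝ)^(n+1) * al^(n+2) with he
  have habs : |e| = al^(n+2) := by
    rw [he, abs_mul, abs_pow, abs_neg, abs_one, one_pow, one_mul,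
      abs_of_pos (al_pow_pos (n+2))]
  have he1 : -al^(n+2) ≤ e := by rw [← habs]; exact neg_abs_le e
  have he2 : e ≤ al^(n+2) := by rw [← habs]; exact le_abs_self e
  have hlt : al^(n+2) < al^(n+1) := al_pow_succ_lt (n+1)
  have hfl : ((r:ℝ)+1) * al = ⌊((r:ℝ)+1) * al⌋ + x := (Int.floor_add_fract _).symm
  have hE : (F (n+1) : ℝ) * al = F n + e := E n
  have key : Int.fract ((((F (n+1) + r : ℕ):ℝ)+1) * al) = x + e := by
    apply fract_eq_of ((F n : ℤ) + ⌊((r:ℝ)+1) * al⌋) (by linarith) (by linarith)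
    push_cast
    linear_combination hE + hfl
  have hFn1 : F n + 1 ≤ F (n+1) := by
    obtain ⟨t, rfl⟩ : ∃ t, n = t+1 := ⟨n-1, by omega⟩
    have := F_pos t
    show _ ≤ F (t+1) + F t
    omega
  have hCsucc : al^(n+2) ≤ min (Int.fract (((r:ℝ)+2) * al)) (1 - Int.fract (((r:ℝ)+2) * al)) := by
    have h := Cl (n+1) (by omega) (r+2) (by omega)
      (by omega)
    rw [nrm] at h
    push_cast at h
    convert h using 3 <;> ring_nf
  have equiv : (1 - al ≤ x + e) ↔ (1 - al ≤ x) := by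
    rcases Nat.even_or_odd n with hev | hod
    · have hee : e = -al^(n+2) := by
        rw [he, Odd.neg_one_pow (Even.add_one hev), neg_one_mul]
      constructor
      · intro h; linarith
      · intro h
        have hfr2 : Int.fract (((r:ℝ)+2) * al) = x - (1 - al) := by
          apply fract_eq_of (⌊((r:ℝ)+1) * al⌋ + 1)
            (by linarith [al_pow_pos (n+1), al_pos, al_lt_one])
            (by linarith [al_pow_pos (n+1), al_pos, al_lt_one])
          push_cast
          linear_combination hfl
        rw [hfr2] at hCsucc
        have := le_trans hCsucc (min_le_left _ _)
        linarith
    · have hee : e = al^(n+2) := by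
        rw [he, Even.neg_one_pow (Odd.add_one hod), one_mul]
      constructor
      · intro h
        by_contra hc
        push_neg at hc
        have hfr2 : Int.fract (((r:ℝ)+2) * al) = x + al := by
          apply fract_eq_of (⌊((r:ℝ)+1) * al⌋)
            (by linarith [hx1, al_pow_pos (n+1), al_pos]) (by linarith)
          push_cast
          linear_combination hfl
        rw [hfr2] at hCsucc
        have h2 := le_trans hCsucc (min_le_right _ _)
        have heq : x + e = 1 - al := by linarith
        have hz : ((r+2+F (n+1) : ℕ):ℝ) * al = ((⌊((r:ℝ)+1) * al⌋ + 1 + F n : ℤ):ℝ) := by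
          push_cast
          linear_combination hfl + hE + heq
        exact absurd hz (al_mul_ne_int _
          (Int.natCast_ne_zero.mpr (by have := F_pos (n+1); omega)) _)
      · intro h; linarith
  unfold uu
  rw [key]
  exact if_congr equiv rfl rfl

lemma fibWord_length (n : ℕ) : (fibWord n).length = F n := by
  induction n using Nat.strong_induction_on with
  | _ n ih =>
    match n with
    | 0 => rfl
    | 1 => rfl
    | n+2 =>
      show (fibWord (n+1) ++ fibWord n).length = F (n+1) + F n
      rw [List.length_append, ih (n+1) (by omega), ih n (by omega)]

lemma uu_zero : uu 0 = 1 := by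
  unfold uu
  rw [show ((0:ℕ):ℝ) + 1 = 1 by norm_num, one_mul, fract_al,
    if_pos (le_of_lt al_half)]

lemma uu_one : uu 1 = 0 := by
  unfold uu
  have h2 : (((1:ℕ):ℝ)+1) * al = 1 + al^3 := by
    have hE := E 1
    rw [show F 2 = 2 from rfl, show F 1 = 1 from rfl] at hE
    push_cast at hE ⊢
    linarith
  have hf : Int.fract ((((1:ℕ):ℝ)+1) * al) = al ^ 3 := by
    apply fract_eq_of 1 (le_of_lt (al_pow_pos 3)) (al_pow_lt_one 3 (by omega))
    rw [h2]; push_cast; ring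
  rw [hf, if_neg]
  push_neg
  calc al^3 < al^2 := al_pow_succ_lt 2
  _ = 1 - al := al_sq

lemma word_eq : ∀ n, 1 ≤ n → ∀ i, i < F n → (fibWord n).getD i 0 = uu i := by
  intro n
  induction n using Nat.strong_induction_on with
  | _ n ih =>
    match n with
    | 0 => omega
    | 1 =>
      intro _ i hi
      have : i = 0 := by have : F 1 = 1 := rfl; omega
      subst this
      rw [uu_zero]; rfl
    | 2 =>
      intro _ i hi
      have : i = 0 ∨ i = 1 := by have : F 2 = 2 := rfl; omega
      rcases this with h | h <;> subst h
      · rw [uu_zero]; rfl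
      · rw [uu_one]; rfl
    | n+3 =>
      intro _ i hi
      show (fibWord (n+2) ++ fibWord (n+1)).getD i 0 = uu i
      by_cases h : i < F (n+2)
      · rw [List.getD_append _ _ _ _ (by rw [fibWord_length]; exact h)]
        exact ih (n+2) (by omega) (by omega) i h
      · push_neg at h
        have hlen : (fibWord (n+2)).length = F (n+2) := fibWord_length _
        rw [List.getD_append_right _ _ _ _ (by omega)]
        rw [hlen]
        have hr : i - F (n+2) < F (n+1) := by
          have : F (n+3) = F (n+2) + F (n+1) := rfl
          omega
        rw [ih (n+1) (by omega) (by omega) _ hr]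
        have := shift (n+1) (by omega) (i - F (n+2)) hr
        rw [show F (n+2) + (i - F (n+2)) = i by omega] at this
        exact this.symm

lemma getD_fibWord_shift (n r : ℕ) (hr : r < F n) :
    (fibWord (n+2)).getD (F (n+1) + r) 0 = (fibWord n).getD r 0 := by
  show (fibWord (n+1) ++ fibWord n).getD (F (n+1) + r) 0 = _
  rw [List.getD_append_right _ _ _ _ (by rw [fibWord_length]; omega), fibWord_length]
  congr 1
  omega

lemma getD_fibWord_left (n i : ℕ) (hi : i < F (n+1)) :
    (fibWord (n+2)).getD i 0 = (fibWord (n+1)).getD i 0 := by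
  show (fibWord (n+1) ++ fibWord n).getD i 0 = _
  rw [List.getD_append _ _ _ _ (by rw [fibWord_length]; omega)]

lemma arr : ∀ s m n i j, m + n ≤ s → i < F m → j < F n →
    fibArr m n i j = ((fibWord m).getD i 0, (fibWord n).getD j 0) := by
  intro s
  induction s with
  | zero =>
    intro m n i j hs hi hj
    have hm : m = 0 := by omega
    have hn : n = 0 := by omega
    subst hm; subst hn
    have hi0 : i = 0 := by have : F 0 = 1 := rfl; omega
    have hj0 : j = 0 := by have : F 0 = 1 := rfl; omega
    subst hi0; subst hj0
    simp [fibArr, fibWord]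
  | succ s ih =>
    intro m n i j hs hi hj
    match m, n with
    | 0, 0 =>
      have hi0 : i = 0 := by have : F 0 = 1 := rfl; omega
      have hj0 : j = 0 := by have : F 0 = 1 := rfl; omega
      subst hi0; subst hj0
      simp [fibArr, fibWord]
    | 0, 1 =>
      have hi0 : i = 0 := by have : F 0 = 1 := rfl; omega
      have hj0 : j = 0 := by have : F 1 = 1 := rfl; omega
      subst hi0; subst hj0
      simp [fibArr, fibWord]
    | 1, 0 =>
      have hi0 : i = 0 := by have : F 1 = 1 := rfl; omega
      have hj0 : j = 0 := by have : F 0 = 1 := rfl; omega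
      subst hi0; subst hj0
      simp [fibArr, fibWord]
    | 1, 1 =>
      have hi0 : i = 0 := by have : F 1 = 1 := rfl; omega
      have hj0 : j = 0 := by have : F 1 = 1 := rfl; omega
      subst hi0; subst hj0
      simp [fibArr, fibWord]
    | 0, n+2 =>
      rw [show fibArr 0 (n+2) i j = if j < F (n + 1) then fibArr 0 (n + 1) i j
          else fibArr 0 n i (j - F (n + 1)) from by simp [fibArr]]
      by_cases h : j < F (n+1)
      · rw [if_pos h, ih 0 (n+1) i j (by omega) hi h, getD_fibWord_left]
        exact h
      · push_neg at h
        have hj' : j - F (n+1) < F n := by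
          have : F (n+2) = F (n+1) + F n := rfl
          omega
        rw [if_neg (by omega), ih 0 n i (j - F (n+1)) (by omega) hi hj']
        have := getD_fibWord_shift n (j - F (n+1)) hj'
        rw [show F (n+1) + (j - F (n+1)) = j by omega] at this
        rw [this]
    | 1, n+2 =>
      rw [show fibArr 1 (n+2) i j = if j < F (n + 1) then fibArr 1 (n + 1) i j
          else fibArr 1 n i (j - F (n + 1)) from by simp [fibArr]]
      by_cases h : j < F (n+1)
      · rw [if_pos h, ih 1 (n+1) i j (by omega) hi h, getD_fibWord_left]
        exact h
      · push_neg at h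
        have hj' : j - F (n+1) < F n := by
          have : F (n+2) = F (n+1) + F n := rfl
          omega
        rw [if_neg (by omega), ih 1 n i (j - F (n+1)) (by omega) hi hj']
        have := getD_fibWord_shift n (j - F (n+1)) hj'
        rw [show F (n+1) + (j - F (n+1)) = j by omega] at this
        rw [this]
    | m+2, n =>
      rw [show fibArr (m+2) n i j = if i < F (m + 1) then fibArr (m + 1) n i j
          else fibArr m n (i - F (m + 1)) j from by simp [fibArr]]
      by_cases h : i < F (m+1)
      · rw [if_pos h, ih (m+1) n i j (by omega) h hj, getD_fibWord_left]
        exact h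
      · push_neg at h
        have hi' : i - F (m+1) < F m := by
          have : F (m+2) = F (m+1) + F m := rfl
          omega
        rw [if_neg (by omega), ih m n (i - F (m+1)) j (by omega) hi' hj]
        have := getD_fibWord_shift m (i - F (m+1)) hi'
        rw [show F (m+1) + (i - F (m+1)) = i by omega] at this
        rw [this]

/-- fractional position of the window starting at i -/
def pos (i : ℕ) : ℝ := Int.fract (((i:ℝ)+1) * al)

/-- the letter of the Sturmian configuration at offset p from fractional position x -/
def letter (x : ℝ) (p : ℕ) : Fin 2 :=
  if 1 - al ≤ Int.fract (x + (p:ℝ) * al) then 1 else 0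

/-- threshold -/
def th (j : ℕ) : ℝ := 1 - Int.fract ((j:ℝ) * al)

lemma pos_nonneg (i : ℕ) : 0 ≤ pos i := Int.fract_nonneg _
lemma pos_lt_one (i : ℕ) : pos i < 1 := Int.fract_lt_one _

lemma uu_letter (i p : ℕ) : uu (i + p) = letter (pos i) p := by
  unfold uu letter
  congr 1
  have h : ((↑(i+p):ℝ)+1) * al = (⌊((i:ℝ)+1) * al⌋ : ℝ) + (pos i + (p:ℝ) * al) := by
    have : pos i = ((i:ℝ)+1) * al - ⌊((i:ℝ)+1) * al⌋ := rfl
    rw [this]; push_cast; ring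
  rw [h, Int.fract_intCast_add]

/-- generic floor splitting lemma -/
lemma floor_frac_add (u x : ℝ) (hx : 0 ≤ x) (hx1 : x < 1) :
    ⌊u + x⌋ = ⌊u⌋ + if 1 - Int.fract u ≤ x then 1 else 0 := by
  have hu : u = (⌊u⌋ : ℝ) + Int.fract u := (Int.floor_add_fract u).symm
  have hf0 : 0 ≤ Int.fract u := Int.fract_nonneg u
  have hf1 : Int.fract u < 1 := Int.fract_lt_one u
  by_cases h : 1 - Int.fract u ≤ x
  · rw [if_pos h]
    have heq : u + x = ((⌊u⌋ : ℤ) : ℝ) + (Int.fract u + x) := by push_cast; linarith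
    rw [heq, Int.floor_intCast_add]
    have h2 : Int.fract u + x = ((1:ℤ):ℝ) + (Int.fract u + x - 1) := by push_cast; ring
    rw [h2, Int.floor_intCast_add]
    have h3 : ⌊Int.fract u + x - 1⌋ = 0 :=
      Int.floor_eq_zero_iff.mpr ⟨by linarith, by linarith⟩
    omega
  · rw [if_neg h]
    push_neg at h
    have heq : u + x = ((⌊u⌋ : ℤ) : ℝ) + (Int.fract u + x) := by push_cast; linarith
    rw [heq, Int.floor_intCast_add]
    have : ⌊Int.fract u + x⌋ = 0 := Int.floor_eq_zero_iff.mpr ⟨by linarith, by linarith⟩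
    omega


/-- step lemma: floor increment equals the letter indicator -/
lemma Gstep (x : ℝ) (p : ℕ) :
    ⌊x + ((p:ℝ)+1) * al⌋ = ⌊x + (p:ℝ) * al⌋ +
      (if 1 - al ≤ Int.fract (x + (p:ℝ) * al) then 1 else 0) := by
  have h : x + ((p:ℝ)+1) * al = (x + (p:ℝ) * al) + al := by ring
  rw [h, floor_frac_add _ _ (le_of_lt al_pos) al_lt_one]
  congr 1
  by_cases hc : 1 - al ≤ Int.fract (x + (p:ℝ) * al)
  · rw [if_pos (by linarith), if_pos hc]
  · push_neg at hc
    rw [if_neg (by push_neg; linarith), if_neg (by push_neg; linarith)]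

/-- side lemma: floor at offset j determined by threshold side -/
lemma Gside (x : ℝ) (hx0 : 0 ≤ x) (hx1 : x < 1) (j : ℕ) :
    ⌊x + (j:ℝ) * al⌋ = ⌊(j:ℝ) * al⌋ + (if th j ≤ x then 1 else 0) := by
  have h : x + (j:ℝ) * al = (j:ℝ) * al + x := by ring
  rw [h, floor_frac_add _ _ hx0 hx1]
  rfl

lemma th_zero_not (x : ℝ) (hx1 : x < 1) : ¬ th 0 ≤ x := by
  unfold th
  rw [show ((0:ℕ):ℝ) * al = 0 by norm_num, Int.fract_zero]
  push_neg
  linarith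

/-- windows agree iff threshold sides agree -/
lemma windows_eq_iff (n : ℕ) (x y : ℝ) (hx0 : 0 ≤ x) (hx1 : x < 1)
    (hy0 : 0 ≤ y) (hy1 : y < 1) :
    (∀ p, p < n → letter x p = letter y p) ↔
    (∀ j, 1 ≤ j → j ≤ n → ((th j ≤ x) ↔ (th j ≤ y))) := by
  have hfloor_iff : ∀ j ≤ n, ((th j ≤ x) ↔ (th j ≤ y)) →
      (⌊x + (j:ℝ) * al⌋ = ⌊y + (j:ℝ) * al⌋) := by
    intro j _ hiff
    rw [Gside x hx0 hx1 j, Gside y hy0 hy1 j]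
    by_cases h : th j ≤ x
    · rw [if_pos h, if_pos (hiff.mp h)]
    · rw [if_neg h, if_neg (fun hc => h (hiff.mpr hc))]
  constructor
  · intro hl j hj1 hjn
    -- first: floors equal up to n by induction
    have hfl : ∀ p, p ≤ n → ⌊x + (p:ℝ) * al⌋ = ⌊y + (p:ℝ) * al⌋ := by
      intro p
      induction p with
      | zero =>
        intro _
        simp only [Nat.cast_zero, zero_mul, add_zero]
        rw [Int.floor_eq_zero_iff.mpr ⟨hx0, hx1⟩, Int.floor_eq_zero_iff.mpr ⟨hy0, hy1⟩]
      | succ p ihp =>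
        intro hp
        have h1 := ihp (by omega)
        have h2 := hl p (by omega)
        unfold letter at h2
        have hcond : (1 - al ≤ Int.fract (x + (p:ℝ) * al)) ↔
            (1 - al ≤ Int.fract (y + (p:ℝ) * al)) := by
          by_cases ha : 1 - al ≤ Int.fract (x + (p:ℝ) * al) <;>
            by_cases hb : 1 - al ≤ Int.fract (y + (p:ℝ) * al)
          · exact iff_of_true ha hb
          · rw [if_pos ha, if_neg hb] at h2; exact absurd h2 (by decide)
          · rw [if_neg ha, if_pos hb] at h2; exact absurd h2 (by decide)
          · exact iff_of_false ha hb
        have gx := Gstep x p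
        have gy := Gstep y p
        rw [show ((p:ℝ)+1) = ((p+1:ℕ):ℝ) by push_cast; ring] at gx gy
        rw [gx, gy, h1]
        congr 1
        by_cases ha : 1 - al ≤ Int.fract (x + (p:ℝ) * al)
        · rw [if_pos ha, if_pos (hcond.mp ha)]
        · rw [if_neg ha, if_neg (fun hc => ha (hcond.mpr hc))]
    -- now extract sides from floors
    have hj := hfl j hjn
    rw [Gside x hx0 hx1 j, Gside y hy0 hy1 j] at hj
    by_cases h : th j ≤ x <;> by_cases h' : th j ≤ y
    · exact iff_of_true h h'
    · rw [if_pos h, if_neg h'] at hj; omega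
    · rw [if_neg h, if_pos h'] at hj; omega
    · exact iff_of_false h h'
  · intro hside p hp
    have hiff : ∀ j ≤ n, ((th j ≤ x) ↔ (th j ≤ y)) := by
      intro j hj
      match j with
      | 0 => exact iff_of_false (th_zero_not x hx1) (th_zero_not y hy1)
      | j+1 => exact hside (j+1) (by omega) hj
    have h1 := hfloor_iff p (by omega) (hiff p (by omega))
    have h2 := hfloor_iff (p+1) (by omega) (hiff (p+1) (by omega))
    unfold letter
    have gx := Gstep x p
    have gy := Gstep y p
    rw [show ((p:ℝ)+1) = ((p+1:ℕ):ℝ) by push_cast; ring] at gx gy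
    by_cases ha : 1 - al ≤ Int.fract (x + (p:ℝ) * al) <;>
      by_cases hb : 1 - al ≤ Int.fract (y + (p:ℝ) * al)
    · rw [if_pos ha, if_pos hb]
    · exfalso; rw [if_pos ha] at gx; rw [if_neg hb] at gy; omega
    · exfalso; rw [if_neg ha] at gx; rw [if_pos hb] at gy; omega
    · rw [if_neg ha, if_neg hb]


lemma fract_nat_pos (q : ℕ) (hq : 1 ≤ q) : 0 < Int.fract ((q:ℝ) * al) := by
  rcases eq_or_lt_of_le (Int.fract_nonneg ((q:ℝ) * al)) with h | h
  · exfalso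
    have heq : (q:ℝ) * al = (⌊(q:ℝ) * al⌋ : ℝ) := by
      have := Int.fract_add_floor ((q:ℝ) * al)
      rw [← h] at this
      linarith
    exact al_mul_ne_int q (Int.natCast_ne_zero.mpr (by omega)) _ (by exact_mod_cast heq)
  · exact h

lemma th_pos (j : ℕ) : 0 < th j := by
  unfold th; linarith [Int.fract_lt_one ((j:ℝ) * al)]

lemma th_lt_one (j : ℕ) (hj : 1 ≤ j) : th j < 1 := by
  unfold th; linarith [fract_nat_pos j hj]

lemma th_inj (j j' : ℕ) (h : th j = th j') : j = j' := by
  unfold th at h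
  have hf : Int.fract ((j:ℝ) * al) = Int.fract ((j':ℝ) * al) := by linarith
  by_contra hne
  have h1 := Int.fract_add_floor ((j:ℝ) * al)
  have h2 := Int.fract_add_floor ((j':ℝ) * al)
  have key : (((j:ℤ) - (j':ℤ)):ℝ) * al = ((⌊(j:ℝ) * al⌋ - ⌊(j':ℝ) * al⌋ : ℤ) : ℝ) := by
    push_cast
    push_cast at h1 h2
    linarith [hf]
  exact al_mul_ne_int ((j:ℤ) - (j':ℤ)) (sub_ne_zero.mpr (by exact_mod_cast hne))
    (⌊(j:ℝ)*al⌋ - ⌊(j':ℝ)*al⌋) (by push_cast; push_cast at key; linarith)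

def cnt (n : ℕ) (x : ℝ) : ℕ := ((Finset.Icc 1 n).filter (fun j => th j ≤ x)).card

lemma cnt_le (n : ℕ) (x : ℝ) : cnt n x ≤ n :=
  le_trans (Finset.card_filter_le _ _) (by simp [Nat.card_Icc])

lemma sides_of_cnt_eq (n : ℕ) (x y : ℝ) (h : cnt n x = cnt n y) :
    ∀ j, 1 ≤ j → j ≤ n → (th j ≤ x ↔ th j ≤ y) := by
  have main : ∀ x y : ℝ, x ≤ y → cnt n x = cnt n y →
      ((Finset.Icc 1 n).filter (fun j => th j ≤ x)) =
      ((Finset.Icc 1 n).filter (fun j => th j ≤ y)) := by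
    intro x y hxy hc
    apply Finset.eq_of_subset_of_card_le
    · exact Finset.monotone_filter_right _ (fun j _ hj => le_trans hj hxy)
    · exact le_of_eq hc.symm
  intro j hj1 hjn
  rcases le_total x y with hxy | hxy
  · have heq := main x y hxy h
    simp only [Finset.ext_iff, Finset.mem_filter, Finset.mem_Icc] at heq
    have hj := heq j
    constructor <;> intro hh
    · exact (hj.mp ⟨⟨hj1, hjn⟩, hh⟩).2
    · exact (hj.mpr ⟨⟨hj1, hjn⟩, hh⟩).2
  · have heq := main y x hxy h.symm
    simp only [Finset.ext_iff, Finset.mem_filter, Finset.mem_Icc] at heq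
    have hj := heq j
    constructor <;> intro hh
    · exact (hj.mpr ⟨⟨hj1, hjn⟩, hh⟩).2
    · exact (hj.mp ⟨⟨hj1, hjn⟩, hh⟩).2


lemma dense_pos (a b : ℝ) (ha : 0 ≤ a) (hab : a < b) (hb : b ≤ 1) :
    ∃ i : ℕ, a < pos i ∧ pos i < b := by
  obtain ⟨n₀, hn₀⟩ := exists_pow_lt_of_lt_one (sub_pos.mpr hab) al_lt_one
  set M := 2*n₀+1 with hM
  set δ := al^(M+2) with hδ
  have hδpos : 0 < δ := al_pow_pos (M+2)
  have hδlt : δ < b - a := by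
    calc δ ≤ al^n₀ := by
          apply pow_le_pow_of_le_one (le_of_lt al_pos) (le_of_lt al_lt_one)
          omega
    _ < b - a := hn₀
  have hδ1 : δ < 1 := by linarith
  have hFδ : (F (M+1) : ℝ) * al = F M + δ := by
    have hE := E M
    have hpar : (-1:ℝ)^(M+1) = 1 := by
      rw [hM, show 2*n₀+1+1 = 2*(n₀+1) from by ring, pow_mul]
      norm_num
    rw [hpar] at hE
    rw [hE, one_mul, hδ]
  set j := (⌊a / δ⌋).toNat + 1 with hj
  have hfl0 : 0 ≤ ⌊a / δ⌋ := Int.floor_nonneg.mpr (div_nonneg ha (le_of_lt hδpos))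
  have htn : ((⌊a / δ⌋.toNat : ℕ) : ℝ) = ((⌊a / δ⌋ : ℤ) : ℝ) := by
    exact_mod_cast congrArg (fun z : ℤ => (z : ℝ)) (Int.toNat_of_nonneg hfl0)
  have hjR : (j:ℝ) = (⌊a / δ⌋ : ℝ) + 1 := by
    rw [hj, Nat.cast_add, Nat.cast_one, htn]
  have hja : a < (j:ℝ) * δ := by
    have h1 : a / δ < (⌊a / δ⌋ : ℝ) + 1 := Int.lt_floor_add_one _
    rw [hjR]
    calc a = (a / δ) * δ := by field_simp
    _ < ((⌊a / δ⌋ : ℝ) + 1) * δ := mul_lt_mul_of_pos_right h1 hδpos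
  have hjb : (j:ℝ) * δ < b := by
    have h1 : (⌊a / δ⌋ : ℝ) ≤ a / δ := Int.floor_le _
    have h2 : (a / δ) * δ = a := by field_simp
    rw [hjR]
    nlinarith
  have hj1 : 1 ≤ j := by omega
  have hpos : pos (j * F (M+1) - 1) = (j:ℝ) * δ := by
    unfold pos
    have hge : 1 ≤ j * F (M+1) := by
      have := F_pos (M+1)
      exact Nat.one_le_iff_ne_zero.mpr (Nat.mul_ne_zero (by omega) (by omega))
    have hcast : ((j * F (M+1) - 1 : ℕ) : ℝ) + 1 = (j : ℝ) * (F (M+1) : ℝ) := by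
      rw [show ((j * F (M+1) - 1 : ℕ) : ℝ) + 1 = ((j * F (M+1) - 1 + 1 : ℕ) : ℝ) by
        push_cast; ring]
      rw [show j * F (M+1) - 1 + 1 = j * F (M+1) from by omega]
      push_cast
      ring
    rw [hcast]
    apply fract_eq_of ((j * F M : ℕ) : ℤ) (by nlinarith) (by linarith)
    rw [mul_assoc, hFδ]
    push_cast
    ring
  exact ⟨j * F (M+1) - 1, by rw [hpos]; exact hja, by rw [hpos]; exact hjb⟩

lemma card_fin_lt (n t : ℕ) (ht : t ≤ n) :
    (Finset.univ.filter (fun u : Fin n => u.val < t)).card = t := by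
  apply Finset.card_eq_of_bijective (fun i hi => (⟨i, by omega⟩ : Fin n))
  · intro a ha
    simp only [Finset.mem_filter, Finset.mem_univ, true_and] at ha
    exact ⟨a.val, ha, rfl⟩
  · intro i hi
    simp only [Finset.mem_filter, Finset.mem_univ, true_and]
    exact hi
  · intro i j hi hj hij
    simpa using congrArg Fin.val hij

lemma exists_rep (n t : ℕ) (ht : t ≤ n) : ∃ i : ℕ, cnt n (pos i) = t := by
  classical
  obtain ⟨s, hs⟩ : ∃ s : Finset ℝ, s = (Finset.Icc 1 n).image th := ⟨_, rfl⟩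
  have hinj : Set.InjOn th (Finset.Icc 1 n) := fun j _ j' _ h => th_inj j j' h
  have hcard : s.card = n := by
    rw [hs, Finset.card_image_of_injOn hinj, Nat.card_Icc]
    omega
  have hsel : ∀ e ∈ s, 0 < e ∧ e < 1 := by
    intro e he
    rw [hs, Finset.mem_image] at he
    obtain ⟨jj, hjm, hje⟩ := he
    rw [Finset.mem_Icc] at hjm
    exact hje ▸ ⟨th_pos jj, th_lt_one jj hjm.1⟩
  obtain ⟨σ, hσ⟩ : ∃ σ : Fin n ≃o {x // x ∈ s}, σ = s.orderIsoOfFin hcard := ⟨_, rfl⟩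
  have hmem' : ∀ u : Fin n, 0 < (σ u : ℝ) ∧ (σ u : ℝ) < 1 := fun u => hsel _ (σ u).2
  have hsm : ∀ {u v : Fin n}, u < v → ((σ u : ℝ) < (σ v : ℝ)) := by
    intro u v huv
    exact σ.strictMono huv
  have hsmle : ∀ {u v : Fin n}, u ≤ v → ((σ u : ℝ) ≤ (σ v : ℝ)) := by
    intro u v huv
    exact σ.monotone huv
  set a : ℝ := if h : 0 < t then (σ ⟨t-1, by omega⟩ : ℝ) else 0 with hadef
  set b : ℝ := if h : t < n then (σ ⟨t, h⟩ : ℝ) else 1 with hbdef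
  have ha0 : 0 ≤ a := by
    rw [hadef]
    split
    · exact le_of_lt (hmem' _).1
    · exact le_refl 0
  have hb1 : b ≤ 1 := by
    rw [hbdef]
    split
    · exact le_of_lt (hmem' _).2
    · exact le_refl 1
  have hab : a < b := by
    rw [hadef, hbdef]
    split <;> split
    · exact hsm (Fin.mk_lt_mk.mpr (by omega))
    · exact (hmem' _).2
    · exact (hmem' _).1
    · norm_num
  obtain ⟨i, hia, hib⟩ := dense_pos a b ha0 hab hb1
  refine ⟨i, ?_⟩
  set x := pos i with hx
  have hcrit : ∀ u : Fin n, ((σ u : ℝ) ≤ x ↔ u.val < t) := by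
    intro u
    constructor
    · intro hu
      by_contra hc
      push_neg at hc
      have htn : t < n := by omega
      have hle : (⟨t, htn⟩ : Fin n) ≤ u := by rw [Fin.le_def]; simpa using hc
      have : b ≤ (σ u : ℝ) := by
        rw [hbdef, dif_pos htn]
        exact hsmle hle
      linarith
    · intro hu
      have ht0 : 0 < t := by omega
      have hle : u ≤ (⟨t-1, by omega⟩ : Fin n) := by rw [Fin.le_def]; simpa using (by omega : u.val ≤ t-1)
      have : (σ u : ℝ) ≤ a := by
        rw [hadef, dif_pos ht0]
        exact hsmle hle
      linarith
  unfold cnt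
  have hcnt1 : (s.filter (fun e => e ≤ x)).card =
      ((Finset.Icc 1 n).filter (fun jj => th jj ≤ x)).card := by
    rw [hs, Finset.filter_image,
      Finset.card_image_of_injOn (hinj.mono (Finset.coe_subset.mpr (Finset.filter_subset _ _)))]
  have hcnt2 : s.filter (fun e => e ≤ x) =
      (Finset.univ.filter (fun u : Fin n => u.val < t)).image (fun u => (σ u : ℝ)) := by
    ext e
    simp only [Finset.mem_filter, Finset.mem_image, Finset.mem_univ, true_and]
    constructor
    · rintro ⟨he, hex⟩
      refine ⟨σ.symm ⟨e, he⟩, ?_, ?_⟩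
      · rw [← hcrit, σ.apply_symm_apply]
        exact hex
      · rw [σ.apply_symm_apply]
    · rintro ⟨u, hu, rfl⟩
      exact ⟨(σ u).2, (hcrit u).mpr hu⟩
  have hinj2 : Function.Injective (fun u : Fin n => (σ u : ℝ)) := by
    intro u v huv
    exact σ.injective (Subtype.coe_injective huv)
  rw [← hcnt1, hcnt2, Finset.card_image_of_injective _ hinj2, card_fin_lt n t ht]


lemma Fac_ncard (n : ℕ) :
    {A : Fin n → Fin 2 | ∃ i : ℕ, ∀ p : Fin n, A p = uu (i + p.val)}.ncard = n + 1 := by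
  classical
  have hrep : ∀ t : Fin (n+1), ∃ i : ℕ, cnt n (pos i) = t.val :=
    fun t => exists_rep n t.val (by omega)
  choose rep hrepc using hrep
  set Ψ : Fin (n+1) → (Fin n → Fin 2) := fun t p => uu (rep t + p.val) with hΨ
  have hwin : ∀ i i' : ℕ, cnt n (pos i) = cnt n (pos i') →
      ∀ p : Fin n, uu (i + p.val) = uu (i' + p.val) := by
    intro i i' hc p
    rw [uu_letter, uu_letter]
    exact (windows_eq_iff n (pos i) (pos i') (pos_nonneg i) (pos_lt_one i)
      (pos_nonneg i') (pos_lt_one i')).mpr (sides_of_cnt_eq n _ _ hc) p.val p.isLt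
  have hcnt : ∀ i i' : ℕ, (∀ p : Fin n, uu (i + p.val) = uu (i' + p.val)) →
      cnt n (pos i) = cnt n (pos i') := by
    intro i i' hww
    have hsides := (windows_eq_iff n (pos i) (pos i') (pos_nonneg i) (pos_lt_one i)
      (pos_nonneg i') (pos_lt_one i')).mp
      (fun p hp => by
        rw [← uu_letter, ← uu_letter]
        exact hww ⟨p, hp⟩)
    unfold cnt
    congr 1
    apply Finset.filter_congr
    intro j hj
    rw [Finset.mem_Icc] at hj
    exact hsides j hj.1 hj.2
  have hΨinj : Function.Injective Ψ := by
    intro t t' htt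
    have h1 : ∀ p : Fin n, uu (rep t + p.val) = uu (rep t' + p.val) := by
      intro p
      exact congrFun htt p
    have h2 := hcnt _ _ h1
    rw [hrepc t, hrepc t'] at h2
    exact Fin.val_injective h2
  have hset : {A : Fin n → Fin 2 | ∃ i : ℕ, ∀ p : Fin n, A p = uu (i + p.val)}
      = Set.range Ψ := by
    ext A
    simp only [Set.mem_setOf_eq, Set.mem_range]
    constructor
    · rintro ⟨i, hi⟩
      have hc : cnt n (pos i) ≤ n := cnt_le n _
      refine ⟨⟨cnt n (pos i), by omega⟩, ?_⟩
      funext p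
      have hw := hwin i (rep ⟨cnt n (pos i), by omega⟩)
        ((hrepc ⟨cnt n (pos i), by omega⟩).symm) p
      rw [hΨ]
      dsimp only
      rw [← hw, ← hi p]
    · rintro ⟨t, rfl⟩
      exact ⟨rep t, fun p => rfl⟩
  rw [hset, ← Set.image_univ, Set.ncard_image_of_injective _ hΨinj, Set.ncard_univ,
    Nat.card_eq_fintype_card, Fintype.card_fin]

end Stmt14Aux
end

open Stmt14Aux in
/-- for k,l ≥ 1, the 2D infinite Fibonacci word f_{∞,∞} (the unique function
agreeing with every f_{m,n}, m,n ≥ 1, on its domain) has exactly (k+1)(l+1) distinct factors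
of size (k,l). -/
theorem stmt14 (w : ℕ × ℕ → Fin 2 × Fin 2)
    (hw : ∀ m n : ℕ, 1 ≤ m → 1 ≤ n → ∀ i < F m, ∀ j < F n, w (i, j) = fibArr m n i j)
    (k l : ℕ) (hk : 1 ≤ k) (hl : 1 ≤ l) :
    {X : Fin k × Fin l → Fin 2 × Fin 2 |
      ∃ i₀ j₀ : ℕ, ∀ p : Fin k × Fin l, X p = w (i₀ + p.1.val, j₀ + p.2.val)}.ncard
      = (k + 1) * (l + 1) := by
  classical
  have w_eq : ∀ i j : ℕ, w (i, j) = (uu i, uu j) := by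
    intro i j
    rw [hw (i+1) (j+1) (by omega) (by omega) i (F_lt i) j (F_lt j),
      arr (i+j+2) (i+1) (j+1) i j (by omega) (F_lt i) (F_lt j),
      word_eq (i+1) (by omega) i (F_lt i), word_eq (j+1) (by omega) j (F_lt j)]
  set Tk := {A : Fin k → Fin 2 | ∃ i : ℕ, ∀ p : Fin k, A p = uu (i + p.val)} with hTk
  set Tl := {A : Fin l → Fin 2 | ∃ i : ℕ, ∀ p : Fin l, A p = uu (i + p.val)} with hTl
  set Φ : (Fin k → Fin 2) × (Fin l → Fin 2) → (Fin k × Fin l → Fin 2 × Fin 2) :=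
    fun AB p => (AB.1 p.1, AB.2 p.2) with hΦ
  have hΦinj : Function.Injective Φ := by
    intro ⟨A, B⟩ ⟨A', B'⟩ hAB
    have h1 : A = A' := by
      funext p
      have := congrFun hAB (p, ⟨0, by omega⟩)
      exact congrArg Prod.fst this
    have h2 : B = B' := by
      funext q
      have := congrFun hAB (⟨0, by omega⟩, q)
      exact congrArg Prod.snd this
    rw [Prod.mk.injEq]
    exact ⟨h1, h2⟩
  have hset : {X : Fin k × Fin l → Fin 2 × Fin 2 |
      ∃ i₀ j₀ : ℕ, ∀ p : Fin k × Fin l, X p = w (i₀ + p.1.val, j₀ + p.2.val)}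
      = Φ '' (Tk ×ˢ Tl) := by
    ext X
    simp only [Set.mem_setOf_eq, Set.mem_image, Set.mem_prod]
    constructor
    · rintro ⟨i₀, j₀, hX⟩
      refine ⟨(fun p => uu (i₀ + p.val), fun q => uu (j₀ + q.val)), ⟨⟨i₀, fun _ => rfl⟩, ⟨j₀, fun _ => rfl⟩⟩, ?_⟩
      funext p
      rw [hΦ]
      dsimp only
      rw [hX p, w_eq]
    · rintro ⟨⟨A, B⟩, ⟨⟨i₀, hA⟩, ⟨j₀, hB⟩⟩, rfl⟩
      refine ⟨i₀, j₀, fun p => ?_⟩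
      rw [hΦ]
      dsimp only
      rw [show A p.1 = uu (i₀ + p.1.val) from hA p.1,
        show B p.2 = uu (j₀ + p.2.val) from hB p.2, w_eq]
  rw [hset, Set.ncard_image_of_injective _ hΦinj,
    ← Nat.card_coe_set_eq, Nat.card_congr (Equiv.Set.prod _ _), Nat.card_prod,
    Nat.card_coe_set_eq, Nat.card_coe_set_eq, Fac_ncard, Fac_ncard]
end

section
/- For m,n ≥ 0 and all 1 ≤ k ≤ F(m), 1 ≤ l ≤ F(n), the number of distinct k × l subarrays occurring in the Fibonacci array f_{m,n} equals p_k(f_m) · p_l(f_n), where p_k(f_m) and p_l(f_n) are the numbers of distinct length-k factors of the 1D Fibonacci word f_m and of distinct length-l factors of f_n, respectively. -/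
/-- Number of distinct length-k factors of a word. -/
noncomputable def pk (w : List (Fin 2)) (k : ℕ) : ℕ :=
  {v : List (Fin 2) | v.length = k ∧ v <:+: w}.ncard

lemma fibWord_length : ∀ n, (fibWord n).length = F n
  | 0 => rfl
  | 1 => rfl
  | n + 2 => by
      simp [fibWord, F, fibWord_length (n + 1), fibWord_length n]

lemma F_pos : ∀ n, 0 < F n
  | 0 => Nat.one_pos
  | 1 => Nat.one_pos
  | n + 2 => by have := F_pos (n + 1); simp only [F]; omega

lemma fibArr_eq : ∀ m n i j, i < F m → j < F n →
    fibArr m n i j = ((fibWord m).getD i 0, (fibWord n).getD j 0)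
  | 0, 0, i, j, hi, hj => by
      have h0 : F 0 = 1 := rfl
      obtain rfl : i = 0 := by omega
      obtain rfl : j = 0 := by omega
      rw [fibArr]; rfl
  | 0, 1, i, j, hi, hj => by
      have h0 : F 0 = 1 := rfl; have h1 : F 1 = 1 := rfl
      obtain rfl : i = 0 := by omega
      obtain rfl : j = 0 := by omega
      rw [fibArr]; rfl
  | 1, 0, i, j, hi, hj => by
      have h0 : F 0 = 1 := rfl; have h1 : F 1 = 1 := rfl
      obtain rfl : i = 0 := by omega
      obtain rfl : j = 0 := by omega
      rw [fibArr]; rfl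
  | 1, 1, i, j, hi, hj => by
      have h1 : F 1 = 1 := rfl
      obtain rfl : i = 0 := by omega
      obtain rfl : j = 0 := by omega
      rw [fibArr]; rfl
  | 0, n + 2, i, j, hi, hj => by
      rw [fibArr]
      have hw : fibWord (n + 2) = fibWord (n + 1) ++ fibWord n := rfl
      split_ifs with h
      · rw [fibArr_eq 0 (n + 1) i j hi h, hw,
          List.getD_append _ _ _ _ (by rw [fibWord_length]; exact h)]
      · have hF : F (n + 2) = F (n + 1) + F n := rfl
        rw [fibArr_eq 0 n i (j - F (n + 1)) hi (by omega), hw,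
          List.getD_append_right _ _ _ _ (by rw [fibWord_length]; omega),
          fibWord_length]
  | 1, n + 2, i, j, hi, hj => by
      rw [fibArr]
      have hw : fibWord (n + 2) = fibWord (n + 1) ++ fibWord n := rfl
      split_ifs with h
      · rw [fibArr_eq 1 (n + 1) i j hi h, hw,
          List.getD_append _ _ _ _ (by rw [fibWord_length]; exact h)]
      · have hF : F (n + 2) = F (n + 1) + F n := rfl
        rw [fibArr_eq 1 n i (j - F (n + 1)) hi (by omega), hw,
          List.getD_append_right _ _ _ _ (by rw [fibWord_length]; omega),
          fibWord_length]
  | m + 2, n, i, j, hi, hj => by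
      rw [fibArr]
      have hw : fibWord (m + 2) = fibWord (m + 1) ++ fibWord m := rfl
      split_ifs with h
      · rw [fibArr_eq (m + 1) n i j h hj, hw,
          List.getD_append _ _ _ _ (by rw [fibWord_length]; exact h)]
      · have hF : F (m + 2) = F (m + 1) + F m := rfl
        rw [fibArr_eq m n (i - F (m + 1)) j (by omega) hj, hw,
          List.getD_append_right _ _ _ _ (by rw [fibWord_length]; omega),
          fibWord_length]
  termination_by m n => (m, n)


/-- for m,n ≥ 0 and 1 ≤ k ≤ F(m), 1 ≤ l ≤ F(n), the number of distinct
k × l subarrays of the Fibonacci array f_{m,n} equals p_k(f_m) · p_l(f_n). -/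
theorem stmt15 (m n k l : ℕ) (hk1 : 1 ≤ k) (hk2 : k ≤ F m) (hl1 : 1 ≤ l) (hl2 : l ≤ F n) :
    {X : Fin k × Fin l → Fin 2 × Fin 2 |
      ∃ i₀ j₀ : ℕ, i₀ + k ≤ F m ∧ j₀ + l ≤ F n ∧
        ∀ p : Fin k × Fin l, X p = fibArr m n (i₀ + p.1.val) (j₀ + p.2.val)}.ncard
      = pk (fibWord m) k * pk (fibWord n) l := by
  classical
  set A : Set (List (Fin 2)) := {v | v.length = k ∧ v <:+: fibWord m} with hA
  set B : Set (List (Fin 2)) := {v | v.length = l ∧ v <:+: fibWord n} with hB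
  set Φ : List (Fin 2) × List (Fin 2) → (Fin k × Fin l → Fin 2 × Fin 2) :=
    fun vw p => (vw.1.getD p.1.val 0, vw.2.getD p.2.val 0) with hΦ
  have hset : {X : Fin k × Fin l → Fin 2 × Fin 2 |
      ∃ i₀ j₀ : ℕ, i₀ + k ≤ F m ∧ j₀ + l ≤ F n ∧
        ∀ p : Fin k × Fin l, X p = fibArr m n (i₀ + p.1.val) (j₀ + p.2.val)}
      = Φ '' (A ×ˢ B) := by
    ext X
    constructor
    · rintro ⟨i₀, j₀, hi, hj, hX⟩
      refine ⟨(((fibWord m).drop i₀).take k, ((fibWord n).drop j₀).take l), ⟨⟨?_, ?_⟩, ?_, ?_⟩, ?_⟩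
      · simp [fibWord_length]; omega
      · exact ((List.take_prefix _ _).isInfix).trans ((List.drop_suffix _ _).isInfix)
      · simp [fibWord_length]; omega
      · exact ((List.take_prefix _ _).isInfix).trans ((List.drop_suffix _ _).isInfix)
      · funext p
        rw [hX p, fibArr_eq m n _ _ (by have := p.1.2; omega) (by have := p.2.2; omega)]
        have h1 : (((fibWord m).drop i₀).take k).getD p.1.val 0
            = (fibWord m).getD (i₀ + p.1.val) 0 := by
          have hp : p.1.val < (((fibWord m).drop i₀).take k).length := by
            simp [fibWord_length]; have := p.1.2; omega
          rw [List.getD_eq_getElem _ _ hp,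
            List.getD_eq_getElem _ _ (by rw [fibWord_length]; have := p.1.2; omega)]
          simp
        have h2 : (((fibWord n).drop j₀).take l).getD p.2.val 0
            = (fibWord n).getD (j₀ + p.2.val) 0 := by
          have hp : p.2.val < (((fibWord n).drop j₀).take l).length := by
            simp [fibWord_length]; have := p.2.2; omega
          rw [List.getD_eq_getElem _ _ hp,
            List.getD_eq_getElem _ _ (by rw [fibWord_length]; have := p.2.2; omega)]
          simp
        simp [hΦ, h1, h2]
    · rintro ⟨⟨v, w⟩, ⟨⟨hv0, s, t, hvw⟩, ⟨hw0, s', t', hww⟩⟩, rfl⟩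
      have hv : v.length = k := hv0
      have hw : w.length = l := hw0
      refine ⟨s.length, s'.length, ?_, ?_, ?_⟩
      · have := congrArg List.length hvw; simp [fibWord_length] at this; omega
      · have := congrArg List.length hww; simp [fibWord_length] at this; omega
      · intro p
        rw [fibArr_eq m n _ _ ?_ ?_]
        · have h1 : (fibWord m).getD (s.length + p.1.val) 0 = v.getD p.1.val 0 := by
            rw [← hvw, List.append_assoc, List.getD_append_right _ _ _ _ (by omega),
              Nat.add_sub_cancel_left, List.getD_append _ _ _ _ (by rw [hv]; exact p.1.2)]
          have h2 : (fibWord n).getD (s'.length + p.2.val) 0 = w.getD p.2.val 0 := by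
            rw [← hww, List.append_assoc, List.getD_append_right _ _ _ _ (by omega),
              Nat.add_sub_cancel_left, List.getD_append _ _ _ _ (by rw [hw]; exact p.2.2)]
          exact Prod.ext h1.symm h2.symm
        · have := congrArg List.length hvw; simp [fibWord_length] at this
          have := p.1.2; omega
        · have := congrArg List.length hww; simp [fibWord_length] at this
          have := p.2.2; omega
  rw [hset]
  have hinj : Set.InjOn Φ (A ×ˢ B) := by
    rintro ⟨v, w⟩ ⟨⟨hv0, -⟩, hw0, -⟩ ⟨v', w'⟩ ⟨⟨hv0', -⟩, hw0', -⟩ heq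
    have hv : v.length = k := hv0
    have hw : w.length = l := hw0
    have hv' : v'.length = k := hv0'
    have hw' : w'.length = l := hw0'
    have hvv : v = v' := by
      apply List.ext_getElem (by rw [hv, hv'])
      intro i h1 h2
      have hik : i < k := by omega
      have := congrFun heq (⟨i, hik⟩, ⟨0, hl1⟩)
      simp only [hΦ, Prod.mk.injEq] at this
      rw [List.getD_eq_getElem _ _ h1, List.getD_eq_getElem _ _ h2] at this
      exact this.1
    have hww : w = w' := by
      apply List.ext_getElem (by rw [hw, hw'])
      intro i h1 h2
      have hil : i < l := by omega
      have := congrFun heq (⟨0, hk1⟩, ⟨i, hil⟩)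
      simp only [hΦ, Prod.mk.injEq] at this
      rw [List.getD_eq_getElem _ _ h1, List.getD_eq_getElem _ _ h2] at this
      exact this.2
    simp [hvv, hww]
  rw [Set.ncard_image_of_injOn hinj]
  have : (A ×ˢ B).ncard = A.ncard * B.ncard := by
    rw [← Nat.card_coe_set_eq, ← Nat.card_coe_set_eq, ← Nat.card_coe_set_eq,
      Nat.card_congr (Equiv.Set.prod A B), Nat.card_prod]
  rw [this]; rfl
end
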